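/- Let a ∈ ℝ, h > 0, and let f be five times continuously differentiable on [a−h, a+h], with M₅ := max over [a−h,a+h] of |f|, |f′|, |f″|, |f‴|, |f⁗|, |f⁽⁵⁾|. Define the pointwise operators Δ_h g := (g(a+h) − g(a−h))/(2h) and ψ_h(u,v) := (1/3)·[u(a)·Δ_h v + Δ_h(u·v)] for functions u, v on [a−h, a+h], and set F := f″. Then there exists a constant C > 0 depending only on M₅ (and not on h) such that |f(a)·f′(a) − ψ_h(f,f) + (h²/2)·ψ_h(F,f)| ≤ C·h⁴. -/

import Mathlib

lemma abs_mul2_le {x y bx by' : ℝ} (hx : |x| ≤ bx) (hy : |y| ≤ by') : |x*y| ≤ bx*by' := by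
  rw [abs_mul]
  exact mul_le_mul hx hy (abs_nonneg y) ((abs_nonneg x).trans hx)

lemma abs_mul3_le {x y t bx by' bt : ℝ} (hx : |x| ≤ bx) (hy : |y| ≤ by') (ht : |t| ≤ bt) :
    |x*y*t| ≤ bx*by'*bt := by
  rw [abs_mul]
  exact mul_le_mul (abs_mul2_le hx hy) ht (abs_nonneg t)
    (mul_nonneg ((abs_nonneg x).trans hx) ((abs_nonneg y).trans hy))

lemma mono_crude {h x y M : ℝ} (h1 : 1 ≤ h) (hx : |x| ≤ M) (hy : |y| ≤ M) (k : ℕ) (hk : k ≤ 5) :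
    |h^k*(x*y)| ≤ M^2*h^5 := by
  have h0 : (0:ℝ) < h := lt_of_lt_of_le one_pos h1
  have hM : (0:ℝ) ≤ M := (abs_nonneg x).trans hx
  calc |h^k*(x*y)| = h^k * |x*y| := by
        rw [abs_mul, abs_of_nonneg (pow_nonneg h0.le k)]
    _ ≤ h^5 * (M*M) := by
        exact mul_le_mul (pow_le_pow_right₀ h1 hk) (abs_mul2_le hx hy) (abs_nonneg _)
          (by positivity)
    _ = M^2*h^5 := by ring

lemma iter_shift {f : ℝ → ℝ} {s : Set ℝ} (hu : UniqueDiffOn ℝ s) {x : ℝ} (hx : x ∈ s) (k : ℕ) :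
    iteratedDerivWithin k (derivWithin f s) s x = iteratedDerivWithin (k+1) f s x :=
  (congrFun iteratedDerivWithin_succ' x).symm

lemma iter_shift2 {f : ℝ → ℝ} {s : Set ℝ} (hu : UniqueDiffOn ℝ s) {x : ℝ} (hx : x ∈ s) (k : ℕ) :
    iteratedDerivWithin k (iteratedDerivWithin 2 f s) s x = iteratedDerivWithin (k+2) f s x := by
  have e2 : Set.EqOn (iteratedDerivWithin 2 f s) (derivWithin (derivWithin f s) s) s := fun z hz => by
    rw [show (2:ℕ) = 1+1 from rfl, iteratedDerivWithin_succ',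
      iteratedDerivWithin_one]
  rw [iteratedDerivWithin_congr e2 hx, iter_shift hu hx, iter_shift hu hx]
set_option maxHeartbeats 4000000 in
lemma alg (M h d0 d1 d2 d3 d4 e1 e2 e3 e4 e5 : ℝ) (h0 : 0 < h) (h1 : h ≤ 1) (hM : 0 ≤ M)
    (hd0 : |d0| ≤ M) (hd1 : |d1| ≤ M) (hd2 : |d2| ≤ M) (hd3 : |d3| ≤ M) (hd4 : |d4| ≤ M)
    (he1 : |e1| ≤ 2*M*h^5) (he2 : |e2| ≤ 2*M*h^5) (he3 : |e3| ≤ M*h^4)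
    (he4 : |e4| ≤ M*h^3) (he5 : |e5| ≤ 4*M*h^3) :
    |(d0 + h*d1 + h^2/2*d2 + h^3/6*d3 + h^4/24*d4 + e1) * (d1 + h*d2 + h^2/2*d3 + h^3/6*d4 + e3) - 1 / 3 * ((d0 + h*d1 + h^2/2*d2 + h^3/6*d3 + h^4/24*d4 + e1) * ((d0 + 2*h*d1 + 2*h^2*d2 + 4/3*h^3*d3 + 2/3*h^4*d4 + e2 - d0) / (2 * h)) + ((d0 + 2*h*d1 + 2*h^2*d2 + 4/3*h^3*d3 + 2/3*h^4*d4 + e2) * (d0 + 2*h*d1 + 2*h^2*d2 + 4/3*h^3*d3 + 2/3*h^4*d4 + e2) - d0 * d0) / (2 * h)) + h ^ 2 / 2 * (1 / 3 * ((d2 + h*d3 + h^2/2*d4 + e4) * ((d0 + 2*h*d1 + 2*h^2*d2 + 4/3*h^3*d3 + 2/3*h^4*d4 + e2 - d0) / (2 * h)) + ((d2 + 2*h*d3 + 2*h^2*d4 + e5) * (d0 + 2*h*d1 + 2*h^2*d2 + 4/3*h^3*d3 + 2/3*h^4*d4 + e2) - d2 * d0) / (2 * h)))| ≤ 20 * M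 ^ 2 * h ^ 4 := by
  have h12 : (0:ℝ) < 12*h := by linarith
  have b0 : |d0*e2| ≤ 2*(M^2*h^5) := by
    refine (abs_mul2_le hd0 he2).trans (le_of_eq ?_); ring
  have b1 : |d0*e3*h| ≤ 1*(M^2*h^5) := by
    refine (abs_mul3_le hd0 he3 (le_of_eq (abs_of_nonneg h0.le))).trans (le_of_eq ?_); ring
  have b2 : |d0*e5*h^2| ≤ 4*(M^2*h^5) := by
    refine (abs_mul3_le hd0 he5 (le_of_eq (abs_of_nonneg (by positivity : (0:ℝ) ≤ h^2)))).trans (le_of_eq ?_); ring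
  have b3 : |d1*e1*h| ≤ 2*(M^2*h^5) := by
    refine (abs_mul3_le hd1 he1 (le_of_eq (abs_of_nonneg h0.le))).trans ?_
    have hp5 : h^6 ≤ h^5 := pow_le_pow_of_le_one h0.le h1 (by norm_num)
    have hmm : (0:ℝ) ≤ M*M*(h^5 - h^6) := mul_nonneg (mul_nonneg hM hM) (sub_nonneg.mpr hp5)
    linarith only [hmm]
  have b4 : |d1*e2*h| ≤ 2*(M^2*h^5) := by
    refine (abs_mul3_le hd1 he2 (le_of_eq (abs_of_nonneg h0.le))).trans ?_
    have hp5 : h^6 ≤ h^5 := pow_le_pow_of_le_one h0.le h1 (by norm_num)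
    have hmm : (0:ℝ) ≤ M*M*(h^5 - h^6) := mul_nonneg (mul_nonneg hM hM) (sub_nonneg.mpr hp5)
    linarith only [hmm]
  have b5 : |d1*e3*h^2| ≤ 1*(M^2*h^5) := by
    refine (abs_mul3_le hd1 he3 (le_of_eq (abs_of_nonneg (by positivity : (0:ℝ) ≤ h^2)))).trans ?_
    have hp5 : h^6 ≤ h^5 := pow_le_pow_of_le_one h0.le h1 (by norm_num)
    have hmm : (0:ℝ) ≤ M*M*(h^5 - h^6) := mul_nonneg (mul_nonneg hM hM) (sub_nonneg.mpr hp5)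
    linarith only [hmm]
  have b6 : |d1*e4*h^3| ≤ 1*(M^2*h^5) := by
    refine (abs_mul3_le hd1 he4 (le_of_eq (abs_of_nonneg (by positivity : (0:ℝ) ≤ h^3)))).trans ?_
    have hp5 : h^6 ≤ h^5 := pow_le_pow_of_le_one h0.le h1 (by norm_num)
    have hmm : (0:ℝ) ≤ M*M*(h^5 - h^6) := mul_nonneg (mul_nonneg hM hM) (sub_nonneg.mpr hp5)
    linarith only [hmm]
  have b7 : |d1*e5*h^3| ≤ 4*(M^2*h^5) := by
    refine (abs_mul3_le hd1 he5 (le_of_eq (abs_of_nonneg (by positivity : (0:ℝ) ≤ h^3)))).trans ?_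
    have hp5 : h^6 ≤ h^5 := pow_le_pow_of_le_one h0.le h1 (by norm_num)
    have hmm : (0:ℝ) ≤ M*M*(h^5 - h^6) := mul_nonneg (mul_nonneg hM hM) (sub_nonneg.mpr hp5)
    linarith only [hmm]
  have b8 : |d2*e1*h^2| ≤ 2*(M^2*h^5) := by
    refine (abs_mul3_le hd2 he1 (le_of_eq (abs_of_nonneg (by positivity : (0:ℝ) ≤ h^2)))).trans ?_
    have hp5 : h^7 ≤ h^5 := pow_le_pow_of_le_one h0.le h1 (by norm_num)
    have hmm : (0:ℝ) ≤ M*M*(h^5 - h^7) := mul_nonneg (mul_nonneg hM hM) (sub_nonneg.mpr hp5)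
    linarith only [hmm]
  have b9 : |d2*e2*h^2| ≤ 2*(M^2*h^5) := by
    refine (abs_mul3_le hd2 he2 (le_of_eq (abs_of_nonneg (by positivity : (0:ℝ) ≤ h^2)))).trans ?_
    have hp5 : h^7 ≤ h^5 := pow_le_pow_of_le_one h0.le h1 (by norm_num)
    have hmm : (0:ℝ) ≤ M*M*(h^5 - h^7) := mul_nonneg (mul_nonneg hM hM) (sub_nonneg.mpr hp5)
    linarith only [hmm]
  have b10 : |d2*e3*h^3| ≤ 1*(M^2*h^5) := by
    refine (abs_mul3_le hd2 he3 (le_of_eq (abs_of_nonneg (by positivity : (0:ℝ) ≤ h^3)))).trans ?_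
    have hp5 : h^7 ≤ h^5 := pow_le_pow_of_le_one h0.le h1 (by norm_num)
    have hmm : (0:ℝ) ≤ M*M*(h^5 - h^7) := mul_nonneg (mul_nonneg hM hM) (sub_nonneg.mpr hp5)
    linarith only [hmm]
  have b11 : |d2*e4*h^4| ≤ 1*(M^2*h^5) := by
    refine (abs_mul3_le hd2 he4 (le_of_eq (abs_of_nonneg (by positivity : (0:ℝ) ≤ h^4)))).trans ?_
    have hp5 : h^7 ≤ h^5 := pow_le_pow_of_le_one h0.le h1 (by norm_num)
    have hmm : (0:ℝ) ≤ M*M*(h^5 - h^7) := mul_nonneg (mul_nonneg hM hM) (sub_nonneg.mpr hp5)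
    linarith only [hmm]
  have b12 : |d2*e5*h^4| ≤ 4*(M^2*h^5) := by
    refine (abs_mul3_le hd2 he5 (le_of_eq (abs_of_nonneg (by positivity : (0:ℝ) ≤ h^4)))).trans ?_
    have hp5 : h^7 ≤ h^5 := pow_le_pow_of_le_one h0.le h1 (by norm_num)
    have hmm : (0:ℝ) ≤ M*M*(h^5 - h^7) := mul_nonneg (mul_nonneg hM hM) (sub_nonneg.mpr hp5)
    linarith only [hmm]
  have b13 : |d3*e1*h^3| ≤ 2*(M^2*h^5) := by
    refine (abs_mul3_le hd3 he1 (le_of_eq (abs_of_nonneg (by positivity : (0:ℝ) ≤ h^3)))).trans ?_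
    have hp5 : h^8 ≤ h^5 := pow_le_pow_of_le_one h0.le h1 (by norm_num)
    have hmm : (0:ℝ) ≤ M*M*(h^5 - h^8) := mul_nonneg (mul_nonneg hM hM) (sub_nonneg.mpr hp5)
    linarith only [hmm]
  have b14 : |d3*e2*h^3| ≤ 2*(M^2*h^5) := by
    refine (abs_mul3_le hd3 he2 (le_of_eq (abs_of_nonneg (by positivity : (0:ℝ) ≤ h^3)))).trans ?_
    have hp5 : h^8 ≤ h^5 := pow_le_pow_of_le_one h0.le h1 (by norm_num)
    have hmm : (0:ℝ) ≤ M*M*(h^5 - h^8) := mul_nonneg (mul_nonneg hM hM) (sub_nonneg.mpr hp5)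
    linarith only [hmm]
  have b15 : |d3*e3*h^4| ≤ 1*(M^2*h^5) := by
    refine (abs_mul3_le hd3 he3 (le_of_eq (abs_of_nonneg (by positivity : (0:ℝ) ≤ h^4)))).trans ?_
    have hp5 : h^8 ≤ h^5 := pow_le_pow_of_le_one h0.le h1 (by norm_num)
    have hmm : (0:ℝ) ≤ M*M*(h^5 - h^8) := mul_nonneg (mul_nonneg hM hM) (sub_nonneg.mpr hp5)
    linarith only [hmm]
  have b16 : |d3*e4*h^5| ≤ 1*(M^2*h^5) := by
    refine (abs_mul3_le hd3 he4 (le_of_eq (abs_of_nonneg (by positivity : (0:ℝ) ≤ h^5)))).trans ?_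
    have hp5 : h^8 ≤ h^5 := pow_le_pow_of_le_one h0.le h1 (by norm_num)
    have hmm : (0:ℝ) ≤ M*M*(h^5 - h^8) := mul_nonneg (mul_nonneg hM hM) (sub_nonneg.mpr hp5)
    linarith only [hmm]
  have b17 : |d3*e5*h^5| ≤ 4*(M^2*h^5) := by
    refine (abs_mul3_le hd3 he5 (le_of_eq (abs_of_nonneg (by positivity : (0:ℝ) ≤ h^5)))).trans ?_
    have hp5 : h^8 ≤ h^5 := pow_le_pow_of_le_one h0.le h1 (by norm_num)
    have hmm : (0:ℝ) ≤ M*M*(h^5 - h^8) := mul_nonneg (mul_nonneg hM hM) (sub_nonneg.mpr hp5)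
    linarith only [hmm]
  have b18 : |d4*e1*h^4| ≤ 2*(M^2*h^5) := by
    refine (abs_mul3_le hd4 he1 (le_of_eq (abs_of_nonneg (by positivity : (0:ℝ) ≤ h^4)))).trans ?_
    have hp5 : h^9 ≤ h^5 := pow_le_pow_of_le_one h0.le h1 (by norm_num)
    have hmm : (0:ℝ) ≤ M*M*(h^5 - h^9) := mul_nonneg (mul_nonneg hM hM) (sub_nonneg.mpr hp5)
    linarith only [hmm]
  have b19 : |d4*e2*h^4| ≤ 2*(M^2*h^5) := by
    refine (abs_mul3_le hd4 he2 (le_of_eq (abs_of_nonneg (by positivity : (0:ℝ) ≤ h^4)))).trans ?_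
    have hp5 : h^9 ≤ h^5 := pow_le_pow_of_le_one h0.le h1 (by norm_num)
    have hmm : (0:ℝ) ≤ M*M*(h^5 - h^9) := mul_nonneg (mul_nonneg hM hM) (sub_nonneg.mpr hp5)
    linarith only [hmm]
  have b20 : |d4*e3*h^5| ≤ 1*(M^2*h^5) := by
    refine (abs_mul3_le hd4 he3 (le_of_eq (abs_of_nonneg (by positivity : (0:ℝ) ≤ h^5)))).trans ?_
    have hp5 : h^9 ≤ h^5 := pow_le_pow_of_le_one h0.le h1 (by norm_num)
    have hmm : (0:ℝ) ≤ M*M*(h^5 - h^9) := mul_nonneg (mul_nonneg hM hM) (sub_nonneg.mpr hp5)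
    linarith only [hmm]
  have b21 : |d4*e4*h^6| ≤ 1*(M^2*h^5) := by
    refine (abs_mul3_le hd4 he4 (le_of_eq (abs_of_nonneg (by positivity : (0:ℝ) ≤ h^6)))).trans ?_
    have hp5 : h^9 ≤ h^5 := pow_le_pow_of_le_one h0.le h1 (by norm_num)
    have hmm : (0:ℝ) ≤ M*M*(h^5 - h^9) := mul_nonneg (mul_nonneg hM hM) (sub_nonneg.mpr hp5)
    linarith only [hmm]
  have b22 : |d4*e5*h^6| ≤ 4*(M^2*h^5) := by
    refine (abs_mul3_le hd4 he5 (le_of_eq (abs_of_nonneg (by positivity : (0:ℝ) ≤ h^6)))).trans ?_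
    have hp5 : h^9 ≤ h^5 := pow_le_pow_of_le_one h0.le h1 (by norm_num)
    have hmm : (0:ℝ) ≤ M*M*(h^5 - h^9) := mul_nonneg (mul_nonneg hM hM) (sub_nonneg.mpr hp5)
    linarith only [hmm]
  have b23 : |e1*e2| ≤ 4*(M^2*h^5) := by
    refine (abs_mul2_le he1 he2).trans ?_
    have hp5 : h^10 ≤ h^5 := pow_le_pow_of_le_one h0.le h1 (by norm_num)
    have hmm : (0:ℝ) ≤ M*M*(h^5 - h^10) := mul_nonneg (mul_nonneg hM hM) (sub_nonneg.mpr hp5)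
    linarith only [hmm]
  have b24 : |e1*e3*h| ≤ 2*(M^2*h^5) := by
    refine (abs_mul3_le he1 he3 (le_of_eq (abs_of_nonneg h0.le))).trans ?_
    have hp5 : h^10 ≤ h^5 := pow_le_pow_of_le_one h0.le h1 (by norm_num)
    have hmm : (0:ℝ) ≤ M*M*(h^5 - h^10) := mul_nonneg (mul_nonneg hM hM) (sub_nonneg.mpr hp5)
    linarith only [hmm]
  have b25 : |e2*e2| ≤ 4*(M^2*h^5) := by
    refine (abs_mul2_le he2 he2).trans ?_
    have hp5 : h^10 ≤ h^5 := pow_le_pow_of_le_one h0.le h1 (by norm_num)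
    have hmm : (0:ℝ) ≤ M*M*(h^5 - h^10) := mul_nonneg (mul_nonneg hM hM) (sub_nonneg.mpr hp5)
    linarith only [hmm]
  have b26 : |e2*e4*h^2| ≤ 2*(M^2*h^5) := by
    refine (abs_mul3_le he2 he4 (le_of_eq (abs_of_nonneg (by positivity : (0:ℝ) ≤ h^2)))).trans ?_
    have hp5 : h^10 ≤ h^5 := pow_le_pow_of_le_one h0.le h1 (by norm_num)
    have hmm : (0:ℝ) ≤ M*M*(h^5 - h^10) := mul_nonneg (mul_nonneg hM hM) (sub_nonneg.mpr hp5)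
    linarith only [hmm]
  have b27 : |e2*e5*h^2| ≤ 8*(M^2*h^5) := by
    refine (abs_mul3_le he2 he5 (le_of_eq (abs_of_nonneg (by positivity : (0:ℝ) ≤ h^2)))).trans ?_
    have hp5 : h^10 ≤ h^5 := pow_le_pow_of_le_one h0.le h1 (by norm_num)
    have hmm : (0:ℝ) ≤ M*M*(h^5 - h^10) := mul_nonneg (mul_nonneg hM hM) (sub_nonneg.mpr hp5)
    linarith only [hmm]
  have gb0 : |(-6)*(d0*e2)| ≤ 12*(M^2*h^5) := by
    rw [abs_mul, show |((-6):ℝ)| = 6 from by norm_num]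
    refine (mul_le_mul_of_nonneg_left b0 (by norm_num)).trans (le_of_eq ?_); ring
  have gb1 : |12*(d0*e3*h)| ≤ 12*(M^2*h^5) := by
    rw [abs_mul, show |(12:ℝ)| = 12 from by norm_num]
    refine (mul_le_mul_of_nonneg_left b1 (by norm_num)).trans (le_of_eq ?_); ring
  have gb2 : |1*(d0*e5*h^2)| ≤ 4*(M^2*h^5) := by
    rw [abs_mul, show |(1:ℝ)| = 1 from by norm_num]
    refine (mul_le_mul_of_nonneg_left b2 (by norm_num)).trans (le_of_eq ?_); ring
  have gb3 : |8*(d1*e1*h)| ≤ 16*(M^2*h^5) := by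
    rw [abs_mul, show |(8:ℝ)| = 8 from by norm_num]
    refine (mul_le_mul_of_nonneg_left b3 (by norm_num)).trans (le_of_eq ?_); ring
  have gb4 : |(-10)*(d1*e2*h)| ≤ 20*(M^2*h^5) := by
    rw [abs_mul, show |((-10):ℝ)| = 10 from by norm_num]
    refine (mul_le_mul_of_nonneg_left b4 (by norm_num)).trans (le_of_eq ?_); ring
  have gb5 : |12*(d1*e3*h^2)| ≤ 12*(M^2*h^5) := by
    rw [abs_mul, show |(12:ℝ)| = 12 from by norm_num]
    refine (mul_le_mul_of_nonneg_left b5 (by norm_num)).trans (le_of_eq ?_); ring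
  have gb6 : |2*(d1*e4*h^3)| ≤ 2*(M^2*h^5) := by
    rw [abs_mul, show |(2:ℝ)| = 2 from by norm_num]
    refine (mul_le_mul_of_nonneg_left b6 (by norm_num)).trans (le_of_eq ?_); ring
  have gb7 : |2*(d1*e5*h^3)| ≤ 8*(M^2*h^5) := by
    rw [abs_mul, show |(2:ℝ)| = 2 from by norm_num]
    refine (mul_le_mul_of_nonneg_left b7 (by norm_num)).trans (le_of_eq ?_); ring
  have gb8 : |8*(d2*e1*h^2)| ≤ 16*(M^2*h^5) := by
    rw [abs_mul, show |(8:ℝ)| = 8 from by norm_num]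
    refine (mul_le_mul_of_nonneg_left b8 (by norm_num)).trans (le_of_eq ?_); ring
  have gb9 : |(-7)*(d2*e2*h^2)| ≤ 14*(M^2*h^5) := by
    rw [abs_mul, show |((-7):ℝ)| = 7 from by norm_num]
    refine (mul_le_mul_of_nonneg_left b9 (by norm_num)).trans (le_of_eq ?_); ring
  have gb10 : |6*(d2*e3*h^3)| ≤ 6*(M^2*h^5) := by
    rw [abs_mul, show |(6:ℝ)| = 6 from by norm_num]
    refine (mul_le_mul_of_nonneg_left b10 (by norm_num)).trans (le_of_eq ?_); ring
  have gb11 : |2*(d2*e4*h^4)| ≤ 2*(M^2*h^5) := by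
    rw [abs_mul, show |(2:ℝ)| = 2 from by norm_num]
    refine (mul_le_mul_of_nonneg_left b11 (by norm_num)).trans (le_of_eq ?_); ring
  have gb12 : |2*(d2*e5*h^4)| ≤ 8*(M^2*h^5) := by
    rw [abs_mul, show |(2:ℝ)| = 2 from by norm_num]
    refine (mul_le_mul_of_nonneg_left b12 (by norm_num)).trans (le_of_eq ?_); ring
  have gb13 : |10/3*(d3*e1*h^3)| ≤ 20/3*(M^2*h^5) := by
    rw [abs_mul, show |(10/3:ℝ)| = 10/3 from by norm_num]
    refine (mul_le_mul_of_nonneg_left b13 (by norm_num)).trans (le_of_eq ?_); ring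
  have gb14 : |(-8/3)*(d3*e2*h^3)| ≤ 16/3*(M^2*h^5) := by
    rw [abs_mul, show |((-8/3):ℝ)| = 8/3 from by norm_num]
    refine (mul_le_mul_of_nonneg_left b14 (by norm_num)).trans (le_of_eq ?_); ring
  have gb15 : |2*(d3*e3*h^4)| ≤ 2*(M^2*h^5) := by
    rw [abs_mul, show |(2:ℝ)| = 2 from by norm_num]
    refine (mul_le_mul_of_nonneg_left b15 (by norm_num)).trans (le_of_eq ?_); ring
  have gb16 : |4/3*(d3*e4*h^5)| ≤ 4/3*(M^2*h^5) := by
    rw [abs_mul, show |(4/3:ℝ)| = 4/3 from by norm_num]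
    refine (mul_le_mul_of_nonneg_left b16 (by norm_num)).trans (le_of_eq ?_); ring
  have gb17 : |4/3*(d3*e5*h^5)| ≤ 16/3*(M^2*h^5) := by
    rw [abs_mul, show |(4/3:ℝ)| = 4/3 from by norm_num]
    refine (mul_le_mul_of_nonneg_left b17 (by norm_num)).trans (le_of_eq ?_); ring
  have gb18 : |2/3*(d4*e1*h^4)| ≤ 4/3*(M^2*h^5) := by
    rw [abs_mul, show |(2/3:ℝ)| = 2/3 from by norm_num]
    refine (mul_le_mul_of_nonneg_left b18 (by norm_num)).trans (le_of_eq ?_); ring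
  have gb19 : |(-1/4)*(d4*e2*h^4)| ≤ 1/2*(M^2*h^5) := by
    rw [abs_mul, show |((-1/4):ℝ)| = 1/4 from by norm_num]
    refine (mul_le_mul_of_nonneg_left b19 (by norm_num)).trans (le_of_eq ?_); ring
  have gb20 : |1/2*(d4*e3*h^5)| ≤ 1/2*(M^2*h^5) := by
    rw [abs_mul, show |(1/2:ℝ)| = 1/2 from by norm_num]
    refine (mul_le_mul_of_nonneg_left b20 (by norm_num)).trans (le_of_eq ?_); ring
  have gb21 : |2/3*(d4*e4*h^6)| ≤ 2/3*(M^2*h^5) := by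
    rw [abs_mul, show |(2/3:ℝ)| = 2/3 from by norm_num]
    refine (mul_le_mul_of_nonneg_left b21 (by norm_num)).trans (le_of_eq ?_); ring
  have gb22 : |2/3*(d4*e5*h^6)| ≤ 8/3*(M^2*h^5) := by
    rw [abs_mul, show |(2/3:ℝ)| = 2/3 from by norm_num]
    refine (mul_le_mul_of_nonneg_left b22 (by norm_num)).trans (le_of_eq ?_); ring
  have gb23 : |(-2)*(e1*e2)| ≤ 8*(M^2*h^5) := by
    rw [abs_mul, show |((-2):ℝ)| = 2 from by norm_num]
    refine (mul_le_mul_of_nonneg_left b23 (by norm_num)).trans (le_of_eq ?_); ring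
  have gb24 : |12*(e1*e3*h)| ≤ 24*(M^2*h^5) := by
    rw [abs_mul, show |(12:ℝ)| = 12 from by norm_num]
    refine (mul_le_mul_of_nonneg_left b24 (by norm_num)).trans (le_of_eq ?_); ring
  have gb25 : |(-2)*(e2*e2)| ≤ 8*(M^2*h^5) := by
    rw [abs_mul, show |((-2):ℝ)| = 2 from by norm_num]
    refine (mul_le_mul_of_nonneg_left b25 (by norm_num)).trans (le_of_eq ?_); ring
  have gb26 : |1*(e2*e4*h^2)| ≤ 2*(M^2*h^5) := by
    rw [abs_mul, show |(1:ℝ)| = 1 from by norm_num]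
    refine (mul_le_mul_of_nonneg_left b26 (by norm_num)).trans (le_of_eq ?_); ring
  have gb27 : |1*(e2*e5*h^2)| ≤ 8*(M^2*h^5) := by
    rw [abs_mul, show |(1:ℝ)| = 1 from by norm_num]
    refine (mul_le_mul_of_nonneg_left b27 (by norm_num)).trans (le_of_eq ?_); ring
  have eb1 : |(-6)*(d0*e2) + 12*(d0*e3*h)| ≤ 24*(M^2*h^5) :=
    le_trans (abs_add_le _ _) (by linarith only [gb0, gb1])
  have eb2 : |(-6)*(d0*e2) + 12*(d0*e3*h) + 1*(d0*e5*h^2)| ≤ 28*(M^2*h^5) :=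
    le_trans (abs_add_le _ _) (by linarith only [eb1, gb2])
  have eb3 : |(-6)*(d0*e2) + 12*(d0*e3*h) + 1*(d0*e5*h^2) + 8*(d1*e1*h)| ≤ 44*(M^2*h^5) :=
    le_trans (abs_add_le _ _) (by linarith only [eb2, gb3])
  have eb4 : |(-6)*(d0*e2) + 12*(d0*e3*h) + 1*(d0*e5*h^2) + 8*(d1*e1*h) + (-10)*(d1*e2*h)| ≤ 64*(M^2*h^5) :=
    le_trans (abs_add_le _ _) (by linarith only [eb3, gb4])
  have eb5 : |(-6)*(d0*e2) + 12*(d0*e3*h) + 1*(d0*e5*h^2) + 8*(d1*e1*h) + (-10)*(d1*e2*h) + 12*(d1*e3*h^2)| ≤ 76*(M^2*h^5) :=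
    le_trans (abs_add_le _ _) (by linarith only [eb4, gb5])
  have eb6 : |(-6)*(d0*e2) + 12*(d0*e3*h) + 1*(d0*e5*h^2) + 8*(d1*e1*h) + (-10)*(d1*e2*h) + 12*(d1*e3*h^2) + 2*(d1*e4*h^3)| ≤ 78*(M^2*h^5) :=
    le_trans (abs_add_le _ _) (by linarith only [eb5, gb6])
  have eb7 : |(-6)*(d0*e2) + 12*(d0*e3*h) + 1*(d0*e5*h^2) + 8*(d1*e1*h) + (-10)*(d1*e2*h) + 12*(d1*e3*h^2) + 2*(d1*e4*h^3) + 2*(d1*e5*h^3)| ≤ 86*(M^2*h^5) :=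
    le_trans (abs_add_le _ _) (by linarith only [eb6, gb7])
  have eb8 : |(-6)*(d0*e2) + 12*(d0*e3*h) + 1*(d0*e5*h^2) + 8*(d1*e1*h) + (-10)*(d1*e2*h) + 12*(d1*e3*h^2) + 2*(d1*e4*h^3) + 2*(d1*e5*h^3) + 8*(d2*e1*h^2)| ≤ 102*(M^2*h^5) :=
    le_trans (abs_add_le _ _) (by linarith only [eb7, gb8])
  have eb9 : |(-6)*(d0*e2) + 12*(d0*e3*h) + 1*(d0*e5*h^2) + 8*(d1*e1*h) + (-10)*(d1*e2*h) + 12*(d1*e3*h^2) + 2*(d1*e4*h^3) + 2*(d1*e5*h^3) + 8*(d2*e1*h^2) + (-7)*(d2*e2*h^2)| ≤ 116*(M^2*h^5) :=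
    le_trans (abs_add_le _ _) (by linarith only [eb8, gb9])
  have eb10 : |(-6)*(d0*e2) + 12*(d0*e3*h) + 1*(d0*e5*h^2) + 8*(d1*e1*h) + (-10)*(d1*e2*h) + 12*(d1*e3*h^2) + 2*(d1*e4*h^3) + 2*(d1*e5*h^3) + 8*(d2*e1*h^2) + (-7)*(d2*e2*h^2) + 6*(d2*e3*h^3)| ≤ 122*(M^2*h^5) :=
    le_trans (abs_add_le _ _) (by linarith only [eb9, gb10])
  have eb11 : |(-6)*(d0*e2) + 12*(d0*e3*h) + 1*(d0*e5*h^2) + 8*(d1*e1*h) + (-10)*(d1*e2*h) + 12*(d1*e3*h^2) + 2*(d1*e4*h^3) + 2*(d1*e5*h^3) + 8*(d2*e1*h^2) + (-7)*(d2*e2*h^2) + 6*(d2*e3*h^3) + 2*(d2*e4*h^4)| ≤ 124*(M^2*h^5) :=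
    le_trans (abs_add_le _ _) (by linarith only [eb10, gb11])
  have eb12 : |(-6)*(d0*e2) + 12*(d0*e3*h) + 1*(d0*e5*h^2) + 8*(d1*e1*h) + (-10)*(d1*e2*h) + 12*(d1*e3*h^2) + 2*(d1*e4*h^3) + 2*(d1*e5*h^3) + 8*(d2*e1*h^2) + (-7)*(d2*e2*h^2) + 6*(d2*e3*h^3) + 2*(d2*e4*h^4) + 2*(d2*e5*h^4)| ≤ 132*(M^2*h^5) :=
    le_trans (abs_add_le _ _) (by linarith only [eb11, gb12])
  have eb13 : |(-6)*(d0*e2) + 12*(d0*e3*h) + 1*(d0*e5*h^2) + 8*(d1*e1*h) + (-10)*(d1*e2*h) + 12*(d1*e3*h^2) + 2*(d1*e4*h^3) + 2*(d1*e5*h^3) + 8*(d2*e1*h^2) + (-7)*(d2*e2*h^2) + 6*(d2*e3*h^3) + 2*(d2*e4*h^4) + 2*(d2*e5*h^4) + 10/3*(d3*e1*h^3)| ≤ 416/3*(M^2*h^5) :=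
    le_trans (abs_add_le _ _) (by linarith only [eb12, gb13])
  have eb14 : |(-6)*(d0*e2) + 12*(d0*e3*h) + 1*(d0*e5*h^2) + 8*(d1*e1*h) + (-10)*(d1*e2*h) + 12*(d1*e3*h^2) + 2*(d1*e4*h^3) + 2*(d1*e5*h^3) + 8*(d2*e1*h^2) + (-7)*(d2*e2*h^2) + 6*(d2*e3*h^3) + 2*(d2*e4*h^4) + 2*(d2*e5*h^4) + 10/3*(d3*e1*h^3) + (-8/3)*(d3*e2*h^3)| ≤ 144*(M^2*h^5) :=
    le_trans (abs_add_le _ _) (by linarith only [eb13, gb14])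
  have eb15 : |(-6)*(d0*e2) + 12*(d0*e3*h) + 1*(d0*e5*h^2) + 8*(d1*e1*h) + (-10)*(d1*e2*h) + 12*(d1*e3*h^2) + 2*(d1*e4*h^3) + 2*(d1*e5*h^3) + 8*(d2*e1*h^2) + (-7)*(d2*e2*h^2) + 6*(d2*e3*h^3) + 2*(d2*e4*h^4) + 2*(d2*e5*h^4) + 10/3*(d3*e1*h^3) + (-8/3)*(d3*e2*h^3) + 2*(d3*e3*h^4)| ≤ 146*(M^2*h^5) :=
    le_trans (abs_add_le _ _) (by linarith only [eb14, gb15])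
  have eb16 : |(-6)*(d0*e2) + 12*(d0*e3*h) + 1*(d0*e5*h^2) + 8*(d1*e1*h) + (-10)*(d1*e2*h) + 12*(d1*e3*h^2) + 2*(d1*e4*h^3) + 2*(d1*e5*h^3) + 8*(d2*e1*h^2) + (-7)*(d2*e2*h^2) + 6*(d2*e3*h^3) + 2*(d2*e4*h^4) + 2*(d2*e5*h^4) + 10/3*(d3*e1*h^3) + (-8/3)*(d3*e2*h^3) + 2*(d3*e3*h^4) + 4/3*(d3*e4*h^5)| ≤ 442/3*(M^2*h^5) :=
    le_trans (abs_add_le _ _) (by linarith only [eb15, gb16])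
  have eb17 : |(-6)*(d0*e2) + 12*(d0*e3*h) + 1*(d0*e5*h^2) + 8*(d1*e1*h) + (-10)*(d1*e2*h) + 12*(d1*e3*h^2) + 2*(d1*e4*h^3) + 2*(d1*e5*h^3) + 8*(d2*e1*h^2) + (-7)*(d2*e2*h^2) + 6*(d2*e3*h^3) + 2*(d2*e4*h^4) + 2*(d2*e5*h^4) + 10/3*(d3*e1*h^3) + (-8/3)*(d3*e2*h^3) + 2*(d3*e3*h^4) + 4/3*(d3*e4*h^5) + 4/3*(d3*e5*h^5)| ≤ 458/3*(M^2*h^5) :=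
    le_trans (abs_add_le _ _) (by linarith only [eb16, gb17])
  have eb18 : |(-6)*(d0*e2) + 12*(d0*e3*h) + 1*(d0*e5*h^2) + 8*(d1*e1*h) + (-10)*(d1*e2*h) + 12*(d1*e3*h^2) + 2*(d1*e4*h^3) + 2*(d1*e5*h^3) + 8*(d2*e1*h^2) + (-7)*(d2*e2*h^2) + 6*(d2*e3*h^3) + 2*(d2*e4*h^4) + 2*(d2*e5*h^4) + 10/3*(d3*e1*h^3) + (-8/3)*(d3*e2*h^3) + 2*(d3*e3*h^4) + 4/3*(d3*e4*h^5) + 4/3*(d3*e5*h^5) + 2/3*(d4*e1*h^4)| ≤ 154*(M^2*h^5) :=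
    le_trans (abs_add_le _ _) (by linarith only [eb17, gb18])
  have eb19 : |(-6)*(d0*e2) + 12*(d0*e3*h) + 1*(d0*e5*h^2) + 8*(d1*e1*h) + (-10)*(d1*e2*h) + 12*(d1*e3*h^2) + 2*(d1*e4*h^3) + 2*(d1*e5*h^3) + 8*(d2*e1*h^2) + (-7)*(d2*e2*h^2) + 6*(d2*e3*h^3) + 2*(d2*e4*h^4) + 2*(d2*e5*h^4) + 10/3*(d3*e1*h^3) + (-8/3)*(d3*e2*h^3) + 2*(d3*e3*h^4) + 4/3*(d3*e4*h^5) + 4/3*(d3*e5*h^5) + 2/3*(d4*e1*h^4) + (-1/4)*(d4*e2*h^4)| ≤ 309/2*(M^2*h^5) :=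
    le_trans (abs_add_le _ _) (by linarith only [eb18, gb19])
  have eb20 : |(-6)*(d0*e2) + 12*(d0*e3*h) + 1*(d0*e5*h^2) + 8*(d1*e1*h) + (-10)*(d1*e2*h) + 12*(d1*e3*h^2) + 2*(d1*e4*h^3) + 2*(d1*e5*h^3) + 8*(d2*e1*h^2) + (-7)*(d2*e2*h^2) + 6*(d2*e3*h^3) + 2*(d2*e4*h^4) + 2*(d2*e5*h^4) + 10/3*(d3*e1*h^3) + (-8/3)*(d3*e2*h^3) + 2*(d3*e3*h^4) + 4/3*(d3*e4*h^5) + 4/3*(d3*e5*h^5) + 2/3*(d4*e1*h^4) + (-1/4)*(d4*e2*h^4) + 1/2*(d4*e3*h^5)| ≤ 155*(M^2*h^5) :=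
    le_trans (abs_add_le _ _) (by linarith only [eb19, gb20])
  have eb21 : |(-6)*(d0*e2) + 12*(d0*e3*h) + 1*(d0*e5*h^2) + 8*(d1*e1*h) + (-10)*(d1*e2*h) + 12*(d1*e3*h^2) + 2*(d1*e4*h^3) + 2*(d1*e5*h^3) + 8*(d2*e1*h^2) + (-7)*(d2*e2*h^2) + 6*(d2*e3*h^3) + 2*(d2*e4*h^4) + 2*(d2*e5*h^4) + 10/3*(d3*e1*h^3) + (-8/3)*(d3*e2*h^3) + 2*(d3*e3*h^4) + 4/3*(d3*e4*h^5) + 4/3*(d3*e5*h^5) + 2/3*(d4*e1*h^4) + (-1/4)*(d4*e2*h^4) + 1/2*(d4*e3*h^5) + 2/3*(d4*e4*h^6)| ≤ 467/3*(M^2*h^5) :=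
    le_trans (abs_add_le _ _) (by linarith only [eb20, gb21])
  have eb22 : |(-6)*(d0*e2) + 12*(d0*e3*h) + 1*(d0*e5*h^2) + 8*(d1*e1*h) + (-10)*(d1*e2*h) + 12*(d1*e3*h^2) + 2*(d1*e4*h^3) + 2*(d1*e5*h^3) + 8*(d2*e1*h^2) + (-7)*(d2*e2*h^2) + 6*(d2*e3*h^3) + 2*(d2*e4*h^4) + 2*(d2*e5*h^4) + 10/3*(d3*e1*h^3) + (-8/3)*(d3*e2*h^3) + 2*(d3*e3*h^4) + 4/3*(d3*e4*h^5) + 4/3*(d3*e5*h^5) + 2/3*(d4*e1*h^4) + (-1/4)*(d4*e2*h^4) + 1/2*(d4*e3*h^5) + 2/3*(d4*e4*h^6) + 2/3*(d4*e5*h^6)| ≤ 475/3*(M^2*h^5) :=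
    le_trans (abs_add_le _ _) (by linarith only [eb21, gb22])
  have eb23 : |(-6)*(d0*e2) + 12*(d0*e3*h) + 1*(d0*e5*h^2) + 8*(d1*e1*h) + (-10)*(d1*e2*h) + 12*(d1*e3*h^2) + 2*(d1*e4*h^3) + 2*(d1*e5*h^3) + 8*(d2*e1*h^2) + (-7)*(d2*e2*h^2) + 6*(d2*e3*h^3) + 2*(d2*e4*h^4) + 2*(d2*e5*h^4) + 10/3*(d3*e1*h^3) + (-8/3)*(d3*e2*h^3) + 2*(d3*e3*h^4) + 4/3*(d3*e4*h^5) + 4/3*(d3*e5*h^5) + 2/3*(d4*e1*h^4) + (-1/4)*(d4*e2*h^4) + 1/2*(d4*e3*h^5) + 2/3*(d4*e4*h^6) + 2/3*(d4*e5*h^6) + (-2)*(e1*e2)| ≤ 499/3*(M^2*h^5) :=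
    le_trans (abs_add_le _ _) (by linarith only [eb22, gb23])
  have eb24 : |(-6)*(d0*e2) + 12*(d0*e3*h) + 1*(d0*e5*h^2) + 8*(d1*e1*h) + (-10)*(d1*e2*h) + 12*(d1*e3*h^2) + 2*(d1*e4*h^3) + 2*(d1*e5*h^3) + 8*(d2*e1*h^2) + (-7)*(d2*e2*h^2) + 6*(d2*e3*h^3) + 2*(d2*e4*h^4) + 2*(d2*e5*h^4) + 10/3*(d3*e1*h^3) + (-8/3)*(d3*e2*h^3) + 2*(d3*e3*h^4) + 4/3*(d3*e4*h^5) + 4/3*(d3*e5*h^5) + 2/3*(d4*e1*h^4) + (-1/4)*(d4*e2*h^4) + 1/2*(d4*e3*h^5) + 2/3*(d4*e4*h^6) + 2/3*(d4*e5*h^6) + (-2)*(e1*e2) + 12*(e1*e3*h)| ≤ 571/3*(M^2*h^5) :=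
    le_trans (abs_add_le _ _) (by linarith only [eb23, gb24])
  have eb25 : |(-6)*(d0*e2) + 12*(d0*e3*h) + 1*(d0*e5*h^2) + 8*(d1*e1*h) + (-10)*(d1*e2*h) + 12*(d1*e3*h^2) + 2*(d1*e4*h^3) + 2*(d1*e5*h^3) + 8*(d2*e1*h^2) + (-7)*(d2*e2*h^2) + 6*(d2*e3*h^3) + 2*(d2*e4*h^4) + 2*(d2*e5*h^4) + 10/3*(d3*e1*h^3) + (-8/3)*(d3*e2*h^3) + 2*(d3*e3*h^4) + 4/3*(d3*e4*h^5) + 4/3*(d3*e5*h^5) + 2/3*(d4*e1*h^4) + (-1/4)*(d4*e2*h^4) + 1/2*(d4*e3*h^5) + 2/3*(d4*e4*h^6) + 2/3*(d4*e5*h^6) + (-2)*(e1*e2) + 12*(e1*e3*h) + (-2)*(e2*e2)| ≤ 595/3*(M^2*h^5) :=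
    le_trans (abs_add_le _ _) (by linarith only [eb24, gb25])
  have eb26 : |(-6)*(d0*e2) + 12*(d0*e3*h) + 1*(d0*e5*h^2) + 8*(d1*e1*h) + (-10)*(d1*e2*h) + 12*(d1*e3*h^2) + 2*(d1*e4*h^3) + 2*(d1*e5*h^3) + 8*(d2*e1*h^2) + (-7)*(d2*e2*h^2) + 6*(d2*e3*h^3) + 2*(d2*e4*h^4) + 2*(d2*e5*h^4) + 10/3*(d3*e1*h^3) + (-8/3)*(d3*e2*h^3) + 2*(d3*e3*h^4) + 4/3*(d3*e4*h^5) + 4/3*(d3*e5*h^5) + 2/3*(d4*e1*h^4) + (-1/4)*(d4*e2*h^4) + 1/2*(d4*e3*h^5) + 2/3*(d4*e4*h^6) + 2/3*(d4*e5*h^6) + (-2)*(e1*e2) + 12*(e1*e3*h) + (-2)*(e2*e2) + 1*(e2*e4*h^2)| ≤ 601/3*(M^2*h^5) :=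
    le_trans (abs_add_le _ _) (by linarith only [eb25, gb26])
  have eb27 : |(-6)*(d0*e2) + 12*(d0*e3*h) + 1*(d0*e5*h^2) + 8*(d1*e1*h) + (-10)*(d1*e2*h) + 12*(d1*e3*h^2) + 2*(d1*e4*h^3) + 2*(d1*e5*h^3) + 8*(d2*e1*h^2) + (-7)*(d2*e2*h^2) + 6*(d2*e3*h^3) + 2*(d2*e4*h^4) + 2*(d2*e5*h^4) + 10/3*(d3*e1*h^3) + (-8/3)*(d3*e2*h^3) + 2*(d3*e3*h^4) + 4/3*(d3*e4*h^5) + 4/3*(d3*e5*h^5) + 2/3*(d4*e1*h^4) + (-1/4)*(d4*e2*h^4) + 1/2*(d4*e3*h^5) + 2/3*(d4*e4*h^6) + 2/3*(d4*e5*h^6) + (-2)*(e1*e2) + 12*(e1*e3*h) + (-2)*(e2*e2) + 1*(e2*e4*h^2) + 1*(e2*e5*h^2)| ≤ 625/3*(M^2*h^5) :=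
    le_trans (abs_add_le _ _) (by linarith only [eb26, gb27])
  have q0 : |d1*d4| ≤ M*M := abs_mul2_le hd1 hd4
  have gq0 : |2/3*(d1*d4)| ≤ 2/3*M^2 := by
    rw [abs_mul, show |(2/3:ℝ)| = 2/3 from by norm_num]
    refine (mul_le_mul_of_nonneg_left q0 (by norm_num)).trans (le_of_eq ?_); ring
  have q1 : |d2*d3| ≤ M*M := abs_mul2_le hd2 hd3
  have gq1 : |1*(d2*d3)| ≤ 1*M^2 := by
    rw [abs_mul, show |(1:ℝ)| = 1 from by norm_num]
    refine (mul_le_mul_of_nonneg_left q1 (by norm_num)).trans (le_of_eq ?_); ring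
  have q2 : |d2*d4*h| ≤ M*M*1 := abs_mul3_le hd2 hd4 (by rw [abs_of_nonneg h0.le]; exact h1)
  have gq2 : |5/3*(d2*d4*h)| ≤ 5/3*M^2 := by
    rw [abs_mul, show |(5/3:ℝ)| = 5/3 from by norm_num]
    refine (mul_le_mul_of_nonneg_left q2 (by norm_num)).trans (le_of_eq ?_); ring
  have q3 : |d3*d3*h| ≤ M*M*1 := abs_mul3_le hd3 hd3 (by rw [abs_of_nonneg h0.le]; exact h1)
  have gq3 : |1*(d3*d3*h)| ≤ 1*M^2 := by
    rw [abs_mul, show |(1:ℝ)| = 1 from by norm_num]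
    refine (mul_le_mul_of_nonneg_left q3 (by norm_num)).trans (le_of_eq ?_); ring
  have q4 : |d3*d4*h^2| ≤ M*M*1 := abs_mul3_le hd3 hd4 (by rw [abs_of_nonneg (by positivity : (0:ℝ) ≤ h^2)]; exact pow_le_one₀ h0.le h1)
  have gq4 : |73/36*(d3*d4*h^2)| ≤ 73/36*M^2 := by
    rw [abs_mul, show |(73/36:ℝ)| = 73/36 from by norm_num]
    refine (mul_le_mul_of_nonneg_left q4 (by norm_num)).trans (le_of_eq ?_); ring
  have q5 : |d4*d4*h^3| ≤ M*M*1 := abs_mul3_le hd4 hd4 (by rw [abs_of_nonneg (by positivity : (0:ℝ) ≤ h^3)]; exact pow_le_one₀ h0.le h1)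
  have gq5 : |29/36*(d4*d4*h^3)| ≤ 29/36*M^2 := by
    rw [abs_mul, show |(29/36:ℝ)| = 29/36 from by norm_num]
    refine (mul_le_mul_of_nonneg_left q5 (by norm_num)).trans (le_of_eq ?_); ring
  have qb1 : |2/3*(d1*d4) + 1*(d2*d3)| ≤ 5/3*M^2 :=
    le_trans (abs_add_le _ _) (by linarith only [gq0, gq1])
  have qb2 : |2/3*(d1*d4) + 1*(d2*d3) + 5/3*(d2*d4*h)| ≤ 10/3*M^2 :=
    le_trans (abs_add_le _ _) (by linarith only [qb1, gq2])
  have qb3 : |2/3*(d1*d4) + 1*(d2*d3) + 5/3*(d2*d4*h) + 1*(d3*d3*h)| ≤ 13/3*M^2 :=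
    le_trans (abs_add_le _ _) (by linarith only [qb2, gq3])
  have qb4 : |2/3*(d1*d4) + 1*(d2*d3) + 5/3*(d2*d4*h) + 1*(d3*d3*h) + 73/36*(d3*d4*h^2)| ≤ 229/36*M^2 :=
    le_trans (abs_add_le _ _) (by linarith only [qb3, gq4])
  have qb5 : |2/3*(d1*d4) + 1*(d2*d3) + 5/3*(d2*d4*h) + 1*(d3*d3*h) + 73/36*(d3*d4*h^2) + 29/36*(d4*d4*h^3)| ≤ 43/6*M^2 :=
    le_trans (abs_add_le _ _) (by linarith only [qb4, gq5])
  have key : (d0 + h*d1 + h^2/2*d2 + h^3/6*d3 + h^4/24*d4 + e1) * (d1 + h*d2 + h^2/2*d3 + h^3/6*d4 + e3) - 1 / 3 * ((d0 + h*d1 + h^2/2*d2 + h^3/6*d3 + h^4/24*d4 + e1) * ((d0 + 2*h*d1 + 2*h^2*d2 + 4/3*h^3*d3 + 2/3*h^4*d4 + e2 - d0) / (2 * h)) + ((d0 + 2*h*d1 + 2*h^2*d2 + 4/3*h^3*d3 + 2/3*h^4*d4 + e2) * (d0 + 2*h*d1 + 2*h^2*d2 + 4/3*h^3*d3 + 2/3*h^4*d4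 + e2) - d0 * d0) / (2 * h)) + h ^ 2 / 2 * (1 / 3 * ((d2 + h*d3 + h^2/2*d4 + e4) * ((d0 + 2*h*d1 + 2*h^2*d2 + 4/3*h^3*d3 + 2/3*h^4*d4 + e2 - d0) / (2 * h)) + ((d2 + 2*h*d3 + 2*h^2*d4 + e5) * (d0 + 2*h*d1 + 2*h^2*d2 + 4/3*h^3*d3 + 2/3*h^4*d4 + e2) - d2 * d0) / (2 * h))) = (h^5*(2/3*(d1*d4) + 1*(d2*d3) + 5/3*(d2*d4*h) + 1*(d3*d3*h) + 73/36*(d3*d4*h^2) + 29/36*(d4*d4*h^3)) + ((-6)*(d0*e2) + 12*(d0*e3*h) + 1*(d0*e5*h^2) + 8*(d1*e1*h) + (-10)*(d1*e2*h) + 12*(d1*e3*h^2) + 2*(d1*e4*h^3) + 2*(d1*e5*h^3) + 8*(d2*e1*h^2) + (-7)*(d2*e2*h^2) + 6*(d2*e3*h^3) + 2*(d2*e4*h^4) + 2*(d2*e5*h^4) + 10/3*(d3*e1*h^3) + (-8/3)*(d3*e2*h^3) + 2*(d3*e3*h^4) + 4/3*(d3*e4*h^5) + 4/3*(d3*e5*h^5)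 + 2/3*(d4*e1*h^4) + (-1/4)*(d4*e2*h^4) + 1/2*(d4*e3*h^5) + 2/3*(d4*e4*h^6) + 2/3*(d4*e5*h^6) + (-2)*(e1*e2) + 12*(e1*e3*h) + (-2)*(e2*e2) + 1*(e2*e4*h^2) + 1*(e2*e5*h^2)))/(12*h) := by
    rw [eq_div_iff h12.ne']; field_simp; ring
  rw [key, abs_div, abs_of_pos h12, div_le_iff₀ h12]
  calc |h^5*(2/3*(d1*d4) + 1*(d2*d3) + 5/3*(d2*d4*h) + 1*(d3*d3*h) + 73/36*(d3*d4*h^2) + 29/36*(d4*d4*h^3)) + ((-6)*(d0*e2) + 12*(d0*e3*h) + 1*(d0*e5*h^2) + 8*(d1*e1*h) + (-10)*(d1*e2*h) + 12*(d1*e3*h^2) + 2*(d1*e4*h^3) + 2*(d1*e5*h^3) + 8*(d2*e1*h^2) + (-7)*(d2*e2*h^2) + 6*(d2*e3*h^3) + 2*(d2*e4*h^4) + 2*(d2*e5*h^4) + 10/3*(d3*e1*h^3) + (-8/3)*(d3*e2*h^3) + 2*(d3*e3*h^4) + 4/3*(d3*e4*h^5) + 4/3*(d3*e5*h^5) + 2/3*(d4*e1*h^4)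 + (-1/4)*(d4*e2*h^4) + 1/2*(d4*e3*h^5) + 2/3*(d4*e4*h^6) + 2/3*(d4*e5*h^6) + (-2)*(e1*e2) + 12*(e1*e3*h) + (-2)*(e2*e2) + 1*(e2*e4*h^2) + 1*(e2*e5*h^2))| ≤ |h^5*(2/3*(d1*d4) + 1*(d2*d3) + 5/3*(d2*d4*h) + 1*(d3*d3*h) + 73/36*(d3*d4*h^2) + 29/36*(d4*d4*h^3))| + |(-6)*(d0*e2) + 12*(d0*e3*h) + 1*(d0*e5*h^2) + 8*(d1*e1*h) + (-10)*(d1*e2*h) + 12*(d1*e3*h^2) + 2*(d1*e4*h^3) + 2*(d1*e5*h^3) + 8*(d2*e1*h^2) + (-7)*(d2*e2*h^2) + 6*(d2*e3*h^3) + 2*(d2*e4*h^4) + 2*(d2*e5*h^4) + 10/3*(d3*e1*h^3) + (-8/3)*(d3*e2*h^3) + 2*(d3*e3*h^4) + 4/3*(d3*e4*h^5) + 4/3*(d3*e5*h^5) + 2/3*(d4*e1*h^4) + (-1/4)*(d4*e2*h^4) + 1/2*(d4*e3*h^5) + 2/3*(d4*e4*h^6) + 2/3*(d4*e5*h^6)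 + (-2)*(e1*e2) + 12*(e1*e3*h) + (-2)*(e2*e2) + 1*(e2*e4*h^2) + 1*(e2*e5*h^2)| := abs_add_le _ _
    _ = h^5*|2/3*(d1*d4) + 1*(d2*d3) + 5/3*(d2*d4*h) + 1*(d3*d3*h) + 73/36*(d3*d4*h^2) + 29/36*(d4*d4*h^3)| + |(-6)*(d0*e2) + 12*(d0*e3*h) + 1*(d0*e5*h^2) + 8*(d1*e1*h) + (-10)*(d1*e2*h) + 12*(d1*e3*h^2) + 2*(d1*e4*h^3) + 2*(d1*e5*h^3) + 8*(d2*e1*h^2) + (-7)*(d2*e2*h^2) + 6*(d2*e3*h^3) + 2*(d2*e4*h^4) + 2*(d2*e5*h^4) + 10/3*(d3*e1*h^3) + (-8/3)*(d3*e2*h^3) + 2*(d3*e3*h^4) + 4/3*(d3*e4*h^5) + 4/3*(d3*e5*h^5) + 2/3*(d4*e1*h^4) + (-1/4)*(d4*e2*h^4) + 1/2*(d4*e3*h^5) + 2/3*(d4*e4*h^6) + 2/3*(d4*e5*h^6) + (-2)*(e1*e2) + 12*(e1*e3*h) + (-2)*(e2*e2) + 1*(e2*e4*h^2) + 1*(e2*e5*h^2)|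 := by rw [abs_mul, abs_of_nonneg (by positivity : (0:ℝ) ≤ h^5)]
    _ ≤ h^5*(43/6*M^2) + 625/3*(M^2*h^5) :=
        add_le_add (mul_le_mul_of_nonneg_left qb5 (by positivity)) eb27
    _ ≤ 20 * M ^ 2 * h ^ 4 * (12*h) := by linarith only [mul_nonneg (mul_nonneg hM hM) (pow_nonneg h0.le 5)]
lemma crude (M h fa fah fp f1a Fa Fah Fp : ℝ) (h1 : 1 ≤ h) (hM : 0 ≤ M)
    (hfa : |fa| ≤ M) (hfah : |fah| ≤ M) (hfp : |fp| ≤ M) (hf1a : |f1a| ≤ M)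
    (hFa : |Fa| ≤ M) (hFah : |Fah| ≤ M) (hFp : |Fp| ≤ M) :
    |fa * f1a - 1 / 3 * (fa * ((fah - fp) / (2 * h)) + (fah * fah - fp * fp) / (2 * h))
      + h ^ 2 / 2 * (1 / 3 * (Fa * ((fah - fp) / (2 * h)) + (Fah * fah - Fp * fp) / (2 * h)))|
      ≤ 20 * M ^ 2 * h ^ 4 := by
  have h0 : (0:ℝ) < h := lt_of_lt_of_le one_pos h1
  have h12 : (0:ℝ) < 12*h := by linarith
  have c1 := mono_crude h1 hfa hf1a 1 (by norm_num)
  have c2 := mono_crude h1 hfa hfah 0 (by norm_num)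
  have c3 := mono_crude h1 hfa hfp 0 (by norm_num)
  have c4 := mono_crude h1 hfah hfah 0 (by norm_num)
  have c5 := mono_crude h1 hfp hfp 0 (by norm_num)
  have c6 := mono_crude h1 hFa hfah 2 (by norm_num)
  have c7 := mono_crude h1 hFa hfp 2 (by norm_num)
  have c8 := mono_crude h1 hFah hfah 2 (by norm_num)
  have c9 := mono_crude h1 hFp hfp 2 (by norm_num)
  have key : fa * f1a - 1 / 3 * (fa * ((fah - fp) / (2 * h)) + (fah * fah - fp * fp) / (2 * h))
      + h ^ 2 / 2 * (1 / 3 * (Fa * ((fah - fp) / (2 * h)) + (Fah * fah - Fp * fp) / (2 * h)))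
      = (12*(h^1*(fa*f1a)) - 2*(h^0*(fa*fah)) + 2*(h^0*(fa*fp)) - 2*(h^0*(fah*fah))
          + 2*(h^0*(fp*fp)) + (h^2*(Fa*fah)) - (h^2*(Fa*fp)) + (h^2*(Fah*fah))
          - (h^2*(Fp*fp)))/(12*h) := by
    rw [eq_div_iff h12.ne']; field_simp; ring
  rw [key, abs_div, abs_of_pos h12, div_le_iff₀ h12]
  have big : |12*(h^1*(fa*f1a)) - 2*(h^0*(fa*fah)) + 2*(h^0*(fa*fp)) - 2*(h^0*(fah*fah))
      + 2*(h^0*(fp*fp)) + (h^2*(Fa*fah)) - (h^2*(Fa*fp)) + (h^2*(Fah*fah))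
      - (h^2*(Fp*fp))| ≤ 24*(M^2*h^5) := by
    rw [abs_le]
    constructor <;>
      linarith only [(abs_le.mp c1).1, (abs_le.mp c1).2, (abs_le.mp c2).1, (abs_le.mp c2).2,
        (abs_le.mp c3).1, (abs_le.mp c3).2, (abs_le.mp c4).1, (abs_le.mp c4).2,
        (abs_le.mp c5).1, (abs_le.mp c5).2, (abs_le.mp c6).1, (abs_le.mp c6).2,
        (abs_le.mp c7).1, (abs_le.mp c7).2, (abs_le.mp c8).1, (abs_le.mp c8).2,
        (abs_le.mp c9).1, (abs_le.mp c9).2]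
  refine big.trans ?_
  linarith only [mul_nonneg (mul_nonneg hM hM) (pow_nonneg h0.le 5)]

set_option maxHeartbeats 1000000 in
/-- Fourth-order accuracy of the pointwise nonlinear compact operator
`ψ_h(u,v) = (1/3)[u(a)·Δ_h v + Δ_h(u·v)]` with `Δ_h g = (g(a+h) - g(a-h))/(2h)`:
for `f` five times continuously differentiable on `[a-h, a+h]` with `|f|, …, |f⁽⁵⁾|`
bounded by `M₅` there, and `F := f''`,
`|f(a)f'(a) - ψ_h(f,f) + (h²/2)ψ_h(F,f)| ≤ C·h⁴` with `C` depending only on `M₅`. -/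
theorem stmt_12 (M5 : ℝ) (hM5 : 0 < M5) :
    ∃ C > 0, ∀ (a h : ℝ), 0 < h → ∀ f : ℝ → ℝ,
      ∀ s : Set ℝ, s = Set.Icc (a - h) (a + h) →
      ContDiffOn ℝ 5 f s →
      (∀ k : ℕ, k ≤ 5 → ∀ x ∈ s, |iteratedDerivWithin k f s x| ≤ M5) →
      ∀ F : ℝ → ℝ, F = iteratedDerivWithin 2 f s →
      |f a * derivWithin f s a
          - (1 / 3) * (f a * ((f (a + h) - f (a - h)) / (2 * h))
              + (f (a + h) * f (a + h) - f (a - h) * f (a - h)) / (2 * h))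
          + h ^ 2 / 2 * ((1 / 3) * (F a * ((f (a + h) - f (a - h)) / (2 * h))
              + (F (a + h) * f (a + h) - F (a - h) * f (a - h)) / (2 * h)))|
        ≤ C * h ^ 4 := by
  refine ⟨20 * M5 ^ 2, by positivity, ?_⟩
  intro a h h0 f s hs hf hbd F hF
  subst hs; subst hF
  have hab : a - h < a + h := by linarith
  have hu : UniqueDiffOn ℝ (Set.Icc (a - h) (a + h)) := uniqueDiffOn_Icc hab
  have hp : a - h ∈ Set.Icc (a - h) (a + h) := Set.mem_Icc.mpr ⟨le_refl _, by linarith⟩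
  have ha : a ∈ Set.Icc (a - h) (a + h) := Set.mem_Icc.mpr ⟨by linarith, by linarith⟩
  have hb : a + h ∈ Set.Icc (a - h) (a + h) := Set.mem_Icc.mpr ⟨by linarith, le_refl _⟩
  have hb0 := hbd 0 (by norm_num)
  rw [iteratedDerivWithin_zero] at hb0
  have hd1a : |derivWithin f (Set.Icc (a - h) (a + h)) a| ≤ M5 := by
    have := hbd 1 (by norm_num) a ha
    rwa [iteratedDerivWithin_one] at this
  rcases le_or_gt h 1 with hle | hgt
  · -- h ≤ 1 : Taylor expansion argument
    have hle' : a - h ≤ a + h := by linarith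
    have hC5 : ∀ y ∈ Set.Icc (a - h) (a + h),
        ‖iteratedDerivWithin 5 f (Set.Icc (a - h) (a + h)) y‖ ≤ M5 := fun y hy => by
      rw [Real.norm_eq_abs]; exact hbd 5 le_rfl y hy
    have hf5 : ContDiffOn ℝ ((4:ℕ)+1) f (Set.Icc (a - h) (a + h)) := by exact_mod_cast hf
    -- expansion of f a
    have T1 := taylor_mean_remainder_bound (n := 4) hle' hf5 ha hC5
    have hTP1 : taylorWithinEval f 4 (Set.Icc (a - h) (a + h)) (a - h) a
        = f (a - h) + h*iteratedDerivWithin 1 f (Set.Icc (a - h) (a + h)) (a - h)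
          + h^2/2*iteratedDerivWithin 2 f (Set.Icc (a - h) (a + h)) (a - h)
          + h^3/6*iteratedDerivWithin 3 f (Set.Icc (a - h) (a + h)) (a - h)
          + h^4/24*iteratedDerivWithin 4 f (Set.Icc (a - h) (a + h)) (a - h) := by
      rw [taylor_within_apply]
      simp only [Finset.sum_range_succ, Finset.sum_range_zero, smul_eq_mul,
        iteratedDerivWithin_zero]
      push_cast [Nat.factorial]
      ring
    obtain ⟨e1, he1b, he1e⟩ : ∃ e : ℝ, |e| ≤ 2*M5*h^5 ∧ f a
        = f (a - h) + h*iteratedDerivWithin 1 f (Set.Icc (a - h) (a + h)) (a - h)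
          + h^2/2*iteratedDerivWithin 2 f (Set.Icc (a - h) (a + h)) (a - h)
          + h^3/6*iteratedDerivWithin 3 f (Set.Icc (a - h) (a + h)) (a - h)
          + h^4/24*iteratedDerivWithin 4 f (Set.Icc (a - h) (a + h)) (a - h) + e := by
      refine ⟨f a - taylorWithinEval f 4 (Set.Icc (a - h) (a + h)) (a - h) a, ?_,
        by rw [hTP1]; ring⟩
      have t1 := T1
      rw [Real.norm_eq_abs] at t1
      refine t1.trans ?_
      rw [show a - (a - h) = h from by ring]
      norm_num [Nat.factorial]
      nlinarith [mul_nonneg hM5.le (pow_nonneg h0.le 5)]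
    -- expansion of f (a+h)
    have T2 := taylor_mean_remainder_bound (n := 4) hle' hf5 hb hC5
    have hTP2 : taylorWithinEval f 4 (Set.Icc (a - h) (a + h)) (a - h) (a + h)
        = f (a - h) + 2*h*iteratedDerivWithin 1 f (Set.Icc (a - h) (a + h)) (a - h)
          + 2*h^2*iteratedDerivWithin 2 f (Set.Icc (a - h) (a + h)) (a - h)
          + 4/3*h^3*iteratedDerivWithin 3 f (Set.Icc (a - h) (a + h)) (a - h)
          + 2/3*h^4*iteratedDerivWithin 4 f (Set.Icc (a - h) (a + h)) (a - h) := by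
      rw [taylor_within_apply]
      simp only [Finset.sum_range_succ, Finset.sum_range_zero, smul_eq_mul,
        iteratedDerivWithin_zero]
      push_cast [Nat.factorial]
      ring
    obtain ⟨e2, he2b, he2e⟩ : ∃ e : ℝ, |e| ≤ 2*M5*h^5 ∧ f (a + h)
        = f (a - h) + 2*h*iteratedDerivWithin 1 f (Set.Icc (a - h) (a + h)) (a - h)
          + 2*h^2*iteratedDerivWithin 2 f (Set.Icc (a - h) (a + h)) (a - h)
          + 4/3*h^3*iteratedDerivWithin 3 f (Set.Icc (a - h) (a + h)) (a - h)
          + 2/3*h^4*iteratedDerivWithin 4 f (Set.Icc (a - h) (a + h)) (a - h) + e := by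
      refine ⟨f (a + h) - taylorWithinEval f 4 (Set.Icc (a - h) (a + h)) (a - h) (a + h), ?_,
        by rw [hTP2]; ring⟩
      have t2 := T2
      rw [Real.norm_eq_abs] at t2
      refine t2.trans ?_
      rw [show a + h - (a - h) = 2*h from by ring]
      norm_num [Nat.factorial]
      nlinarith [mul_nonneg hM5.le (pow_nonneg h0.le 5)]
    -- expansion of f' a
    have hg4 : ContDiffOn ℝ ((3:ℕ)+1) (derivWithin f (Set.Icc (a - h) (a + h)))
        (Set.Icc (a - h) (a + h)) := by
      exact_mod_cast hf.derivWithin hu (show (4:WithTop ℕ∞)+1 ≤ 5 by norm_num)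
    have hC4 : ∀ y ∈ Set.Icc (a - h) (a + h),
        ‖iteratedDerivWithin 4 (derivWithin f (Set.Icc (a - h) (a + h)))
          (Set.Icc (a - h) (a + h)) y‖ ≤ M5 := fun y hy => by
      rw [Real.norm_eq_abs, iter_shift hu hy 4]
      exact hbd 5 (by norm_num) y hy
    have T3 := taylor_mean_remainder_bound (n := 3) hle' hg4 ha hC4
    have hTP3 : taylorWithinEval (derivWithin f (Set.Icc (a - h) (a + h))) 3
        (Set.Icc (a - h) (a + h)) (a - h) a
        = iteratedDerivWithin 1 f (Set.Icc (a - h) (a + h)) (a - h)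
          + h*iteratedDerivWithin 2 f (Set.Icc (a - h) (a + h)) (a - h)
          + h^2/2*iteratedDerivWithin 3 f (Set.Icc (a - h) (a + h)) (a - h)
          + h^3/6*iteratedDerivWithin 4 f (Set.Icc (a - h) (a + h)) (a - h) := by
      rw [taylor_within_apply]
      simp only [Finset.sum_range_succ, Finset.sum_range_zero, smul_eq_mul,
        iteratedDerivWithin_zero]
      rw [← congrFun (iteratedDerivWithin_one (f := f) (s := Set.Icc (a - h) (a + h))) (a - h), iter_shift hu hp 1, iter_shift hu hp 2,
        iter_shift hu hp 3]
      push_cast [Nat.factorial]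
      ring
    obtain ⟨e3, he3b, he3e⟩ : ∃ e : ℝ, |e| ≤ M5*h^4 ∧
        derivWithin f (Set.Icc (a - h) (a + h)) a
        = iteratedDerivWithin 1 f (Set.Icc (a - h) (a + h)) (a - h)
          + h*iteratedDerivWithin 2 f (Set.Icc (a - h) (a + h)) (a - h)
          + h^2/2*iteratedDerivWithin 3 f (Set.Icc (a - h) (a + h)) (a - h)
          + h^3/6*iteratedDerivWithin 4 f (Set.Icc (a - h) (a + h)) (a - h) + e := by
      refine ⟨derivWithin f (Set.Icc (a - h) (a + h)) a - taylorWithinEval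
        (derivWithin f (Set.Icc (a - h) (a + h))) 3 (Set.Icc (a - h) (a + h)) (a - h) a, ?_,
        by rw [hTP3]; ring⟩
      have t3 := T3
      rw [Real.norm_eq_abs] at t3
      refine t3.trans ?_
      rw [show a - (a - h) = h from by ring]
      norm_num [Nat.factorial]
      nlinarith [mul_nonneg hM5.le (pow_nonneg h0.le 4)]
    -- expansions of f'' at a and a+h
    have hG3 : ContDiffOn ℝ ((2:ℕ)+1) (iteratedDerivWithin 2 f (Set.Icc (a - h) (a + h)))
        (Set.Icc (a - h) (a + h)) := by
      have hgg := (hf.derivWithin hu (show (4:WithTop ℕ∞)+1 ≤ 5 by norm_num) :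
          ContDiffOn ℝ 4 (derivWithin f (Set.Icc (a - h) (a + h))) _).derivWithin hu
          (show (3:WithTop ℕ∞)+1 ≤ 4 by norm_num)
      have e2' : ∀ y ∈ Set.Icc (a - h) (a + h),
          iteratedDerivWithin 2 f (Set.Icc (a - h) (a + h)) y
          = derivWithin (derivWithin f (Set.Icc (a - h) (a + h))) (Set.Icc (a - h) (a + h)) y :=
        fun z hz => by
          rw [show (2:ℕ) = 1+1 from rfl, iteratedDerivWithin_succ',
            iteratedDerivWithin_one]
      exact_mod_cast hgg.congr e2'
    have hC3 : ∀ y ∈ Set.Icc (a - h) (a + h),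
        ‖iteratedDerivWithin 3 (iteratedDerivWithin 2 f (Set.Icc (a - h) (a + h)))
          (Set.Icc (a - h) (a + h)) y‖ ≤ M5 := fun y hy => by
      rw [Real.norm_eq_abs, iter_shift2 hu hy 3]
      exact hbd 5 (by norm_num) y hy
    have T4 := taylor_mean_remainder_bound (n := 2) hle' hG3 ha hC3
    have hTP4 : taylorWithinEval (iteratedDerivWithin 2 f (Set.Icc (a - h) (a + h))) 2
        (Set.Icc (a - h) (a + h)) (a - h) a
        = iteratedDerivWithin 2 f (Set.Icc (a - h) (a + h)) (a - h)
          + h*iteratedDerivWithin 3 f (Set.Icc (a - h) (a + h)) (a - h)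
          + h^2/2*iteratedDerivWithin 4 f (Set.Icc (a - h) (a + h)) (a - h) := by
      rw [taylor_within_apply]
      simp only [Finset.sum_range_succ, Finset.sum_range_zero, smul_eq_mul,
        iteratedDerivWithin_zero]
      rw [iter_shift2 hu hp 1, iter_shift2 hu hp 2]
      push_cast [Nat.factorial]
      ring
    obtain ⟨e4, he4b, he4e⟩ : ∃ e : ℝ, |e| ≤ M5*h^3 ∧
        iteratedDerivWithin 2 f (Set.Icc (a - h) (a + h)) a
        = iteratedDerivWithin 2 f (Set.Icc (a - h) (a + h)) (a - h)
          + h*iteratedDerivWithin 3 f (Set.Icc (a - h) (a + h)) (a - h)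
          + h^2/2*iteratedDerivWithin 4 f (Set.Icc (a - h) (a + h)) (a - h) + e := by
      refine ⟨iteratedDerivWithin 2 f (Set.Icc (a - h) (a + h)) a - taylorWithinEval
        (iteratedDerivWithin 2 f (Set.Icc (a - h) (a + h))) 2 (Set.Icc (a - h) (a + h))
        (a - h) a, ?_, by rw [hTP4]; ring⟩
      have t4 := T4
      rw [Real.norm_eq_abs] at t4
      refine t4.trans ?_
      rw [show a - (a - h) = h from by ring]
      norm_num [Nat.factorial]
      nlinarith [mul_nonneg hM5.le (pow_nonneg h0.le 3)]
    have T5 := taylor_mean_remainder_bound (n := 2) hle' hG3 hb hC3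
    have hTP5 : taylorWithinEval (iteratedDerivWithin 2 f (Set.Icc (a - h) (a + h))) 2
        (Set.Icc (a - h) (a + h)) (a - h) (a + h)
        = iteratedDerivWithin 2 f (Set.Icc (a - h) (a + h)) (a - h)
          + 2*h*iteratedDerivWithin 3 f (Set.Icc (a - h) (a + h)) (a - h)
          + 2*h^2*iteratedDerivWithin 4 f (Set.Icc (a - h) (a + h)) (a - h) := by
      rw [taylor_within_apply]
      simp only [Finset.sum_range_succ, Finset.sum_range_zero, smul_eq_mul,
        iteratedDerivWithin_zero]
      rw [iter_shift2 hu hp 1, iter_shift2 hu hp 2]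
      push_cast [Nat.factorial]
      ring
    obtain ⟨e5, he5b, he5e⟩ : ∃ e : ℝ, |e| ≤ 4*M5*h^3 ∧
        iteratedDerivWithin 2 f (Set.Icc (a - h) (a + h)) (a + h)
        = iteratedDerivWithin 2 f (Set.Icc (a - h) (a + h)) (a - h)
          + 2*h*iteratedDerivWithin 3 f (Set.Icc (a - h) (a + h)) (a - h)
          + 2*h^2*iteratedDerivWithin 4 f (Set.Icc (a - h) (a + h)) (a - h) + e := by
      refine ⟨iteratedDerivWithin 2 f (Set.Icc (a - h) (a + h)) (a + h) - taylorWithinEval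
        (iteratedDerivWithin 2 f (Set.Icc (a - h) (a + h))) 2 (Set.Icc (a - h) (a + h))
        (a - h) (a + h), ?_, by rw [hTP5]; ring⟩
      have t5 := T5
      rw [Real.norm_eq_abs] at t5
      refine t5.trans ?_
      rw [show a + h - (a - h) = 2*h from by ring]
      norm_num [Nat.factorial]
      nlinarith [mul_nonneg hM5.le (pow_nonneg h0.le 3)]
    rw [he1e, he2e, he3e, he4e, he5e]
    exact alg M5 h (f (a - h))
      (iteratedDerivWithin 1 f (Set.Icc (a - h) (a + h)) (a - h))
      (iteratedDerivWithin 2 f (Set.Icc (a - h) (a + h)) (a - h))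
      (iteratedDerivWithin 3 f (Set.Icc (a - h) (a + h)) (a - h))
      (iteratedDerivWithin 4 f (Set.Icc (a - h) (a + h)) (a - h))
      e1 e2 e3 e4 e5 h0 hle hM5.le (hb0 _ hp) (hbd 1 (by norm_num) _ hp)
      (hbd 2 (by norm_num) _ hp) (hbd 3 (by norm_num) _ hp) (hbd 4 (by norm_num) _ hp)
      he1b he2b he3b he4b he5b
  · -- 1 < h : crude bound
    exact crude M5 h (f a) (f (a + h)) (f (a - h))
      (derivWithin f (Set.Icc (a - h) (a + h)) a)
      (iteratedDerivWithin 2 f (Set.Icc (a - h) (a + h)) a)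
      (iteratedDerivWithin 2 f (Set.Icc (a - h) (a + h)) (a + h))
      (iteratedDerivWithin 2 f (Set.Icc (a - h) (a + h)) (a - h))
      hgt.le hM5.le (hb0 a ha) (hb0 _ hb) (hb0 _ hp) hd1a
      (hbd 2 (by norm_num) a ha) (hbd 2 (by norm_num) _ hb) (hbd 2 (by norm_num) _ hp)
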